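/- Let 0 < q < 1 and z ≠ 0 complex, and let λ ∈ [0,1). Then ∑_{k=0}^n q^{k²}(-e^{2λπi}/z)^k · (q;q)_∞/((q;q)_k (q;q)_{n-k}) = A_q(e^{2λπi}/z) + r_n with |r_n| ≤ (2(-q³;q)_∞ B_q(|z|^{-1})/(q;q)_∞)·( q^{n/2} + q^{n²/4}/|z|^{⌊n/2⌋} ) for n sufficiently large. -/

import Mathlib

open Complex

/-- The q-Pochhammer symbol `(q;q)_k = ∏_{j=1}^k (1 - q^j)`. -/
noncomputable def qPoch (q : ℝ) (k : ℕ) : ℝ := ∏ j ∈ Finset.range k, (1 - q ^ (j + 1))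

/-- `(q;q)_∞ = ∏_{j=1}^∞ (1 - q^j)`. -/
noncomputable def qPochInf (q : ℝ) : ℝ := ∏' j : ℕ, (1 - q ^ (j + 1))

/-- `(-q³;q)_∞ = ∏_{j=0}^∞ (1 + q^{j+3})`. -/
noncomputable def negQ3PochInf (q : ℝ) : ℝ := ∏' j : ℕ, (1 + q ^ (j + 3))

/-- Ramanujan's function `A_q(w) = ∑_{k=0}^∞ q^{k²} (-w)^k / (q;q)_k`. -/
noncomputable def Aq (q : ℝ) (w : ℂ) : ℂ := ∑' k : ℕ, (q : ℂ) ^ (k ^ 2) * (-w) ^ k / (qPoch q k : ℂ)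

/-- `B_q(x) = ∑_{k=0}^∞ q^{k²} x^k / (q;q)_k`. -/
noncomputable def Bq (q x : ℝ) : ℝ := ∑' k : ℕ, q ^ (k ^ 2) * x ^ k / qPoch q k

lemma powlt {q : ℝ} (hq0 : 0 < q) (hq1 : q < 1) (j : ℕ) : q ^ (j+1) < 1 :=
  pow_lt_one₀ hq0.le hq1 (by omega)

lemma qPoch_pos {q : ℝ} (hq0 : 0 < q) (hq1 : q < 1) (k : ℕ) : 0 < qPoch q k :=
  Finset.prod_pos fun j _ => by linarith [powlt hq0 hq1 j]

lemma qPoch_le_one {q : ℝ} (hq0 : 0 < q) (hq1 : q < 1) (k : ℕ) : qPoch q k ≤ 1 :=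
  Finset.prod_le_one (fun j _ => by linarith [powlt hq0 hq1 j]) (fun j _ => by nlinarith [pow_pos hq0 (j+1)])

lemma qPoch_succ (q : ℝ) (k : ℕ) : qPoch q (k+1) = qPoch q k * (1 - q ^ (k+1)) :=
  Finset.prod_range_succ _ _

lemma qPoch_anti {q : ℝ} (hq0 : 0 < q) (hq1 : q < 1) {m k : ℕ} (h : m ≤ k) :
    qPoch q k ≤ qPoch q m := by
  induction k, h using Nat.le_induction with
  | base => exact le_refl _
  | succ n hn ih =>
    rw [qPoch_succ]
    calc qPoch q n * (1 - q ^ (n+1)) ≤ qPoch q n * 1 := by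
          have := qPoch_pos hq0 hq1 n
          nlinarith [pow_pos hq0 (n+1)]
      _ = qPoch q n := mul_one _
      _ ≤ qPoch q m := ih

lemma qPoch_sub_le {q : ℝ} (hq0 : 0 < q) (hq1 : q < 1) {m K : ℕ} (h : m ≤ K) :
    qPoch q m - qPoch q K ≤ ∑ j ∈ Finset.Ico m K, q ^ (j+1) := by
  induction K, h using Nat.le_induction with
  | base => simp
  | succ n hn ih =>
    rw [qPoch_succ, Finset.sum_Ico_succ_top hn]
    have h1 : qPoch q n * q ^ (n+1) ≤ q ^ (n+1) := by
      nlinarith [qPoch_le_one hq0 hq1 n, qPoch_pos hq0 hq1 n, pow_pos hq0 (n+1)]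
    nlinarith

lemma geom_Ico_le {q : ℝ} (hq0 : 0 < q) (hq1 : q < 1) (m K : ℕ) :
    ∑ j ∈ Finset.Ico m K, q ^ (j+1) ≤ q ^ (m+1) / (1 - q) := by
  rcases le_or_gt m K with h | h
  · have : ∑ j ∈ Finset.Ico m K, q ^ (j+1) = q^(m+1) * ∑ i ∈ Finset.range (K - m), q ^ i := by
      rw [Finset.mul_sum, Finset.sum_Ico_eq_sum_range]
      apply Finset.sum_congr rfl
      intro i _
      rw [← pow_add]
      ring_nf
    rw [this]
    rw [div_eq_mul_inv]
    apply mul_le_mul_of_nonneg_left _ (by positivity)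
    have h2 := Summable.sum_le_tsum (Finset.range (K-m)) (fun i _ => by positivity)
      (summable_geometric_of_lt_one hq0.le hq1)
    rw [tsum_geometric_of_lt_one hq0.le hq1] at h2
    exact h2
  · rw [Finset.Ico_eq_empty (by omega)]
    have h1q : (0:ℝ) < 1 - q := by linarith
    simp
    positivity

lemma qPoch_lb {q : ℝ} (hq0 : 0 < q) (hq1 : q < 1) {m K : ℕ} (h : m ≤ K) :
    qPoch q m * (1 - ∑ j ∈ Finset.Ico m K, q ^ (j+1)) ≤ qPoch q K := by
  induction K, h using Nat.le_induction with
  | base => simp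
  | succ n hn ih =>
    rw [qPoch_succ, Finset.sum_Ico_succ_top hn]
    have hp := qPoch_pos hq0 hq1 n
    have hm := qPoch_pos hq0 hq1 m
    have hml := qPoch_le_one hq0 hq1 m
    have hq := pow_pos hq0 (n+1)
    have hql := powlt hq0 hq1 n
    have hS : (0:ℝ) ≤ ∑ j ∈ Finset.Ico m n, q ^ (j+1) :=
      Finset.sum_nonneg fun j _ => by positivity
    nlinarith [mul_le_mul_of_nonneg_right ih (by linarith : (0:ℝ) ≤ 1 - q^(n+1)), mul_nonneg (mul_nonneg hm.le hS) hq.le]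

section main
open Filter Topology
variable {q : ℝ}
variable {q : ℝ}

lemma summable_qpow (hq0 : 0 < q) (hq1 : q < 1) (m : ℕ) :
    Summable (fun j : ℕ => q ^ (j + m)) := by
  have := (summable_geometric_of_lt_one hq0.le hq1).mul_left (q ^ m)
  apply this.congr
  intro j
  rw [← pow_add]
  ring_nf

lemma log_one_sub_summable (hq0 : 0 < q) (hq1 : q < 1) :
    Summable (fun j : ℕ => Real.log (1 - q ^ (j+1))) := by
  rw [← summable_abs_iff]
  refine Summable.of_nonneg_of_le (fun j => abs_nonneg _) (fun j => ?_)
    ((summable_qpow hq0 hq1 1).div_const (1 - q))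
  · 
    have hx1 : q ^ (j+1) < 1 := pow_lt_one₀ hq0.le hq1 (by omega)
    have hx0 : 0 < q ^ (j+1) := pow_pos hq0 _
    have hxq : q ^ (j+1) ≤ q := by
      calc q ^ (j+1) ≤ q ^ 1 := pow_le_pow_of_le_one hq0.le hq1.le (by omega)
        _ = q := pow_one q
    have hpos : 0 < 1 - q ^ (j+1) := by linarith
    rw [abs_of_nonpos (Real.log_nonpos (by linarith) (by linarith))]
    rw [← Real.log_inv]
    have hle := Real.log_le_sub_one_of_pos (x := (1 - q ^ (j+1))⁻¹) (by positivity)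
    have h2 : (1 - q ^ (j+1))⁻¹ - 1 ≤ q ^ (j+1) / (1 - q) := by
      have e : (1 - q ^ (j+1))⁻¹ - 1 = q ^ (j+1) / (1 - q ^ (j+1)) := by
        field_simp
        ring
      rw [e]
      gcongr
      all_goals linarith
    linarith

lemma multipliable_one_sub (hq0 : 0 < q) (hq1 : q < 1) :
    Multipliable (fun j : ℕ => 1 - q ^ (j+1)) := by
  have := Real.multipliable_of_summable_log (f := fun j : ℕ => 1 - q ^ (j+1))
    (fun j => by show (0:ℝ) < 1 - q ^ (j+1); nlinarith [pow_lt_one₀ hq0.le hq1 (show j+1 ≠ 0 by omega)])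
    (log_one_sub_summable hq0 hq1)
  exact this

lemma log_one_add_summable (hq0 : 0 < q) (hq1 : q < 1) :
    Summable (fun j : ℕ => Real.log (1 + q ^ (j+3))) := by
  rw [← summable_abs_iff]
  refine Summable.of_nonneg_of_le (fun j => abs_nonneg _) (fun j => ?_)
    (summable_qpow hq0 hq1 3)
  · 
    have hx0 : 0 < q ^ (j+3) := pow_pos hq0 _
    rw [_root_.abs_of_nonneg (Real.log_nonneg (by linarith))]
    have := Real.log_le_sub_one_of_pos (x := 1 + q ^ (j+3)) (by linarith)
    linarith

lemma multipliable_one_add (hq0 : 0 < q) (hq1 : q < 1) :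
    Multipliable (fun j : ℕ => 1 + q ^ (j+3)) := by
  have := Real.multipliable_of_summable_log (f := fun j : ℕ => 1 + q ^ (j+3))
    (fun j => by show (0:ℝ) < 1 + q ^ (j+3); nlinarith [pow_pos hq0 (j+3)])
    (log_one_add_summable hq0 hq1)
  exact this


open Filter
variable {q : ℝ}

lemma qPoch_tendsto (hq0 : 0 < q) (hq1 : q < 1) :
    Tendsto (fun K => qPoch q K) atTop (𝓝 (qPochInf q)) :=
  (multipliable_one_sub hq0 hq1).hasProd.tendsto_prod_nat

lemma qPochInf_le (hq0 : 0 < q) (hq1 : q < 1) (m : ℕ) : qPochInf q ≤ qPoch q m := by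
  apply le_of_tendsto (qPoch_tendsto hq0 hq1)
  filter_upwards [eventually_ge_atTop m] with K hK
  exact qPoch_anti hq0 hq1 hK

lemma qPoch_sub_inf (hq0 : 0 < q) (hq1 : q < 1) (m : ℕ) :
    qPoch q m - qPochInf q ≤ q ^ (m+1) / (1 - q) := by
  have h : Tendsto (fun K => qPoch q m - qPoch q K) atTop (𝓝 (qPoch q m - qPochInf q)) :=
    (qPoch_tendsto hq0 hq1).const_sub _
  apply le_of_tendsto h
  filter_upwards [eventually_ge_atTop m] with K hK
  exact le_trans (qPoch_sub_le hq0 hq1 hK) (geom_Ico_le hq0 hq1 m K)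

lemma qPochInf_pos (hq0 : 0 < q) (hq1 : q < 1) : 0 < qPochInf q := by
  have ht : Tendsto (fun m : ℕ => q ^ (m+1) / (1 - q)) atTop (𝓝 0) := by
    have := (tendsto_pow_atTop_nhds_zero_of_lt_one hq0.le hq1).div_const (1 - q)
    rw [zero_div] at this
    exact this.comp (tendsto_add_atTop_nat 1)
  have hev := ht.eventually_le_const (show (0:ℝ) < 1/2 by norm_num)
  obtain ⟨m, hm⟩ := hev.exists
  have hker : ∀ K, m ≤ K → qPoch q m * (1 - q ^ (m+1) / (1 - q)) ≤ qPoch q K := by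
    intro K hK
    calc qPoch q m * (1 - q ^ (m+1) / (1 - q))
        ≤ qPoch q m * (1 - ∑ j ∈ Finset.Ico m K, q ^ (j+1)) := by
          have := geom_Ico_le hq0 hq1 m K
          have := (qPoch_pos hq0 hq1 m).le
          nlinarith
      _ ≤ qPoch q K := qPoch_lb hq0 hq1 hK
  have hlim : qPoch q m * (1 - q ^ (m+1) / (1 - q)) ≤ qPochInf q := by
    apply ge_of_tendsto (qPoch_tendsto hq0 hq1)
    filter_upwards [eventually_ge_atTop m] with K hK
    exact hker K hK
  have := qPoch_pos hq0 hq1 m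
  nlinarith

lemma negQ3_ge (hq0 : 0 < q) (hq1 : q < 1) :
    1 + q ^ 3 / (1 - q) ≤ negQ3PochInf q := by
  have hpart : ∀ K : ℕ, 1 + ∑ j ∈ Finset.range K, q ^ (j+3)
      ≤ ∏ j ∈ Finset.range K, (1 + q ^ (j+3)) := by
    intro K
    induction K with
    | zero => simp
    | succ n ih =>
      rw [Finset.sum_range_succ, Finset.prod_range_succ]
      have hS : (0:ℝ) ≤ ∑ j ∈ Finset.range n, q ^ (j+3) :=
        Finset.sum_nonneg fun j _ => by positivity
      nlinarith [pow_pos hq0 (n+3)]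
  have hR : Tendsto (fun K => ∏ j ∈ Finset.range K, (1 + q ^ (j+3))) atTop
      (𝓝 (negQ3PochInf q)) :=
    (multipliable_one_add hq0 hq1).hasProd.tendsto_prod_nat
  have hsum : HasSum (fun j : ℕ => q ^ (j+3)) (q ^ 3 / (1 - q)) := by
    have := (hasSum_geometric_of_lt_one hq0.le hq1).mul_left (q ^ 3)
    rw [show q ^ 3 * (1-q)⁻¹ = q ^ 3 / (1-q) by rw [div_eq_mul_inv]] at this
    apply this.congr_fun
    intro j
    rw [← pow_add]
    ring_nf
  have hL : Tendsto (fun K => 1 + ∑ j ∈ Finset.range K, q ^ (j+3)) atTop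
      (𝓝 (1 + q ^ 3 / (1 - q))) := (hsum.tendsto_sum_nat).const_add 1
  exact le_of_tendsto_of_tendsto' hL hR hpart


end main

section part4
open Filter Topology
variable {q : ℝ}

lemma g_nonneg (hq0 : 0 < q) (hq1 : q < 1) {x : ℝ} (hx : 0 ≤ x) (k : ℕ) :
    0 ≤ q ^ (k^2) * x ^ k / qPoch q k :=
  div_nonneg (by positivity) (qPoch_pos hq0 hq1 k).le

lemma summable_g (hq0 : 0 < q) (hq1 : q < 1) {x : ℝ} (hx : 0 ≤ x) :
    Summable (fun k : ℕ => q ^ (k^2) * x ^ k / qPoch q k) := by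
  apply summable_of_ratio_norm_eventually_le (r := 1/2) (by norm_num)
  have ht : Tendsto (fun k : ℕ => q ^ (2*k+1) * x / (1 - q)) atTop (𝓝 0) := by
    have h2 : Tendsto (fun k : ℕ => (q^2) ^ k) atTop (𝓝 0) :=
      tendsto_pow_atTop_nhds_zero_of_lt_one (by positivity) (by nlinarith)
    have := (h2.mul_const (q * x / (1 - q)))
    rw [zero_mul] at this
    apply this.congr
    intro k
    rw [← pow_mul]
    ring
  have h1q : (0:ℝ) < 1 - q := by linarith
  filter_upwards [ht.eventually_le_const (show (0:ℝ) < 1/2 by norm_num)] with k hk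
  have hf : ∀ m : ℕ, 0 ≤ q ^ (m^2) * x ^ m / qPoch q m := g_nonneg hq0 hq1 hx
  rw [Real.norm_of_nonneg (hf _), Real.norm_of_nonneg (hf _)]
  have hP := qPoch_pos hq0 hq1 k
  have hP1 := qPoch_pos hq0 hq1 (k+1)
  have hle : (1:ℝ) - q ≤ 1 - q ^ (k+1) := by
    have : q ^ (k+1) ≤ q := by
      calc q ^ (k+1) ≤ q ^ 1 := pow_le_pow_of_le_one hq0.le hq1.le (by omega)
        _ = q := pow_one q
    linarith
  have key : q ^ ((k+1)^2) * x ^ (k+1) / qPoch q (k+1)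
      ≤ (q ^ (2*k+1) * x / (1 - q)) * (q ^ (k^2) * x ^ k / qPoch q k) := by
    rw [qPoch_succ, show (k+1)^2 = k^2 + (2*k+1) by ring, pow_add, pow_succ]
    have hnum : (0:ℝ) ≤ q ^ (k^2) * q ^ (2*k+1) * (x ^ k * x) := by positivity
    calc q ^ (k^2) * q ^ (2*k+1) * (x ^ k * x) / (qPoch q k * (1 - q ^ (k+1)))
        ≤ q ^ (k^2) * q ^ (2*k+1) * (x ^ k * x) / (qPoch q k * (1 - q)) := by
          gcongr
      _ = (q ^ (2*k+1) * x / (1 - q)) * (q ^ (k^2) * x ^ k / qPoch q k) := by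
          field_simp
    -- done
  calc q ^ ((k+1)^2) * x ^ (k+1) / qPoch q (k+1)
      ≤ (q ^ (2*k+1) * x / (1 - q)) * (q ^ (k^2) * x ^ k / qPoch q k) := key
    _ ≤ 1/2 * (q ^ (k^2) * x ^ k / qPoch q k) :=
        mul_le_mul_of_nonneg_right hk (hf k)

lemma one_le_Bq (hq0 : 0 < q) (hq1 : q < 1) {x : ℝ} (hx : 0 ≤ x) : 1 ≤ Bq q x := by
  have h := Summable.le_tsum (summable_g hq0 hq1 hx) 0 (fun j _ => g_nonneg hq0 hq1 hx j)
  simpa [qPoch, Bq] using h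

lemma sum_g_le_Bq (hq0 : 0 < q) (hq1 : q < 1) {x : ℝ} (hx : 0 ≤ x) (s : Finset ℕ) :
    ∑ k ∈ s, q ^ (k^2) * x ^ k / qPoch q k ≤ Bq q x :=
  Summable.sum_le_tsum s (fun j _ => g_nonneg hq0 hq1 hx j) (summable_g hq0 hq1 hx)

end part4

section part5
open Filter Topology
variable {q : ℝ}

lemma norm_a (hq0 : 0 < q) (hq1 : q < 1) (w : ℂ) (k : ℕ) :
    ‖(q : ℂ) ^ (k ^ 2) * (-w) ^ k / (qPoch q k : ℂ)‖
      = q ^ (k^2) * ‖w‖ ^ k / qPoch q k := by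
  rw [norm_div, norm_mul, norm_pow, norm_pow, norm_neg]
  rw [Complex.norm_real, Complex.norm_real, Real.norm_eq_abs, Real.norm_eq_abs,
    abs_of_pos hq0, abs_of_pos (qPoch_pos hq0 hq1 k)]

lemma summable_a (hq0 : 0 < q) (hq1 : q < 1) (w : ℂ) :
    Summable (fun k : ℕ => (q : ℂ) ^ (k ^ 2) * (-w) ^ k / (qPoch q k : ℂ)) := by
  apply Summable.of_norm
  have := summable_g hq0 hq1 (norm_nonneg w)
  apply this.congr
  intro k
  exact (norm_a hq0 hq1 w k).symm

lemma tail_le (hq0 : 0 < q) (hq1 : q < 1) {x : ℝ} (hx : 0 ≤ x) {n : ℕ}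
    (hc1 : q ^ n * x ≤ 1/2) :
    ∑' j : ℕ, q ^ ((j + (n/2+1))^2) * x ^ (j + (n/2+1)) / qPoch q (j + (n/2+1))
      ≤ 2 * (q ^ ((n/2+1)^2) * x ^ (n/2+1) / qPochInf q) := by
  set m := n/2 + 1 with hm
  have hPinf := qPochInf_pos hq0 hq1
  have hterm : ∀ j : ℕ, q ^ ((j+m)^2) * x ^ (j+m) / qPoch q (j+m)
      ≤ (q ^ (m^2) * x ^ m / qPochInf q) * (1/2) ^ j := by
    intro j
    have hPm := qPoch_pos hq0 hq1 (j+m)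
    have hle1 : qPochInf q ≤ qPoch q (j+m) := qPochInf_le hq0 hq1 _
    have hpow : q ^ ((j+m)^2) * x ^ (j+m) ≤ q ^ (m^2) * x ^ m * (1/2) ^ j := by
      have e1 : q ^ ((j+m)^2) ≤ q ^ (m^2 + 2*m*j) := by
        apply pow_le_pow_of_le_one hq0.le hq1.le
        nlinarith [sq_nonneg j]
      have e2 : (q ^ (2*m) * x) ^ j ≤ (1/2) ^ j := by
        apply pow_le_pow_left₀ (by positivity)
        calc q ^ (2*m) * x ≤ q ^ n * x := by
              apply mul_le_mul_of_nonneg_right _ hx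
              apply pow_le_pow_of_le_one hq0.le hq1.le
              omega
          _ ≤ 1/2 := hc1
      calc q ^ ((j+m)^2) * x ^ (j+m)
          ≤ q ^ (m^2 + 2*m*j) * x ^ (j+m) := by
            apply mul_le_mul_of_nonneg_right e1 (by positivity)
        _ = q ^ (m^2) * x ^ m * ((q ^ (2*m) * x) ^ j) := by
            rw [pow_add, pow_add, mul_pow, ← pow_mul]
            ring
        _ ≤ q ^ (m^2) * x ^ m * (1/2) ^ j := by
            apply mul_le_mul_of_nonneg_left e2 (by positivity)
    calc q ^ ((j+m)^2) * x ^ (j+m) / qPoch q (j+m)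
        ≤ q ^ ((j+m)^2) * x ^ (j+m) / qPochInf q := by gcongr
      _ ≤ (q ^ (m^2) * x ^ m * (1/2) ^ j) / qPochInf q := by gcongr
      _ = (q ^ (m^2) * x ^ m / qPochInf q) * (1/2) ^ j := by ring
  have hsum1 : Summable (fun j : ℕ => q ^ ((j+m)^2) * x ^ (j+m) / qPoch q (j+m)) := by
    exact (summable_nat_add_iff (f := fun k : ℕ => q ^ (k^2) * x ^ k / qPoch q k) m).mpr
      (summable_g hq0 hq1 hx)
  have hsum2 : Summable (fun j : ℕ => (q ^ (m^2) * x ^ m / qPochInf q) * (1/2) ^ j) :=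
    (summable_geometric_of_lt_one (by norm_num) (by norm_num)).mul_left _
  calc ∑' j : ℕ, q ^ ((j+m)^2) * x ^ (j+m) / qPoch q (j+m)
      ≤ ∑' j : ℕ, (q ^ (m^2) * x ^ m / qPochInf q) * (1/2) ^ j :=
        Summable.tsum_le_tsum hterm hsum1 hsum2
    _ = (q ^ (m^2) * x ^ m / qPochInf q) * ∑' j : ℕ, ((1:ℝ)/2) ^ j := tsum_mul_left
    _ = 2 * (q ^ (m^2) * x ^ m / qPochInf q) := by
        rw [tsum_geometric_of_lt_one (by norm_num) (by norm_num)]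
        norm_num
        ring

end part5

section part6
open Filter Topology
variable {q : ℝ}

lemma err_le (hq0 : 0 < q) (hq1 : q < 1) (w : ℂ) (n k : ℕ) :
    ‖(q:ℂ) ^ (k^2) * (-w) ^ k * (qPochInf q : ℂ) / ((qPoch q k : ℂ) * (qPoch q (n-k) : ℂ))
      - (q:ℂ) ^ (k^2) * (-w) ^ k / (qPoch q k : ℂ)‖
    ≤ (q ^ (k^2) * ‖w‖ ^ k / qPoch q k) * (q ^ (n-k+1) / ((1-q) * qPochInf q)) := by
  have hPk := qPoch_pos hq0 hq1 k
  have hPnk := qPoch_pos hq0 hq1 (n-k)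
  have hPinf := qPochInf_pos hq0 hq1
  have hle := qPochInf_le hq0 hq1 (n-k)
  have hsub := qPoch_sub_inf hq0 hq1 (n-k)
  have h1q : (0:ℝ) < 1 - q := by linarith
  have heq : (q:ℂ) ^ (k^2) * (-w) ^ k * (qPochInf q : ℂ) / ((qPoch q k : ℂ) * (qPoch q (n-k) : ℂ))
      - (q:ℂ) ^ (k^2) * (-w) ^ k / (qPoch q k : ℂ)
      = (q:ℂ) ^ (k^2) * (-w) ^ k
        * ((qPochInf q / (qPoch q k * qPoch q (n-k)) - 1 / qPoch q k : ℝ) : ℂ) := by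
    push_cast
    ring
  rw [heq, norm_mul, norm_mul, norm_pow, norm_pow, norm_neg, Complex.norm_real,
    Complex.norm_real, Real.norm_eq_abs, Real.norm_eq_abs, abs_of_pos hq0]
  have hv : |qPochInf q / (qPoch q k * qPoch q (n-k)) - 1 / qPoch q k|
      ≤ (q ^ (n-k+1) / (1-q)) / (qPoch q k * qPochInf q) := by
    rw [abs_sub_comm, _root_.abs_of_nonneg ?hnn]
    case hnn =>
      rw [sub_nonneg, div_le_div_iff₀ (by positivity) hPk]
      nlinarith
    have e : 1 / qPoch q k - qPochInf q / (qPoch q k * qPoch q (n-k))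
        = (qPoch q (n-k) - qPochInf q) / (qPoch q k * qPoch q (n-k)) := by
      field_simp
    rw [e]
    calc (qPoch q (n-k) - qPochInf q) / (qPoch q k * qPoch q (n-k))
        ≤ (qPoch q (n-k) - qPochInf q) / (qPoch q k * qPochInf q) := by
          gcongr
      _ ≤ (q ^ (n-k+1) / (1-q)) / (qPoch q k * qPochInf q) := by gcongr
  calc q ^ (k^2) * ‖w‖ ^ k * |qPochInf q / (qPoch q k * qPoch q (n-k)) - 1 / qPoch q k|
      ≤ q ^ (k^2) * ‖w‖ ^ k * ((q ^ (n-k+1) / (1-q)) / (qPoch q k * qPochInf q)) := by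
        apply mul_le_mul_of_nonneg_left hv (by positivity)
    _ = (q ^ (k^2) * ‖w‖ ^ k / qPoch q k) * (q ^ (n-k+1) / ((1-q) * qPochInf q)) := by
        rw [← div_div, ← div_div]
        ring

end part6

set_option maxHeartbeats 1000000 in
open Filter Topology in
theorem stmt_11 (q : ℝ) (hq0 : 0 < q) (hq1 : q < 1) (z : ℂ) (hz : z ≠ 0)
    (lam : ℝ) (hlam0 : 0 ≤ lam) (hlam1 : lam < 1) :
    ∃ N : ℕ, ∀ n : ℕ, N ≤ n → ∃ r : ℂ,
      (∑ k ∈ Finset.range (n + 1),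
          (q : ℂ) ^ (k ^ 2) * (-Complex.exp (2 * (lam : ℂ) * (Real.pi : ℂ) * I) / z) ^ k *
            (qPochInf q : ℂ) / ((qPoch q k : ℂ) * (qPoch q (n - k) : ℂ)))
        = Aq q (Complex.exp (2 * (lam : ℂ) * (Real.pi : ℂ) * I) / z) + r ∧
      ‖r‖ ≤ 2 * negQ3PochInf q * Bq q ‖z‖⁻¹ / qPochInf q *
        (q ^ ((n : ℝ) / 2) + q ^ ((n : ℝ) ^ 2 / 4) / ‖z‖ ^ (n / 2)) := by
  have hPinf := qPochInf_pos hq0 hq1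
  have h1q : (0:ℝ) < 1 - q := by linarith
  have hz0 : (0:ℝ) < ‖z‖ := norm_pos_iff.mpr hz
  set x : ℝ := ‖z‖⁻¹ with hxdef
  have hx0 : (0:ℝ) ≤ x := by positivity
  set w : ℂ := Complex.exp (2 * (lam : ℂ) * (Real.pi : ℂ) * I) / z with hwdef
  have hwx : ‖w‖ = x := by
    rw [hwdef, norm_div, Complex.norm_exp]
    have : (2 * (lam : ℂ) * (Real.pi : ℂ) * I).re = 0 := by simp
    rw [this, Real.exp_zero, hxdef, one_div]
  have hBq1 : (1:ℝ) ≤ Bq q x := one_le_Bq hq0 hq1 hx0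
  have hQ3 := negQ3_ge hq0 hq1
  have hQ31 : (1:ℝ) ≤ negQ3PochInf q := by
    have : (0:ℝ) ≤ q ^ 3 / (1 - q) := by positivity
    linarith
  have hPle1 : qPochInf q ≤ 1 := by
    have := qPochInf_le hq0 hq1 0
    simpa [qPoch] using this
  -- choose N
  have ht1 : Tendsto (fun n : ℕ => q ^ n * x) atTop (𝓝 0) := by
    have := (tendsto_pow_atTop_nhds_zero_of_lt_one hq0.le hq1).mul_const x
    rwa [zero_mul] at this
  have hrpow : ∀ n : ℕ, q ^ ((n : ℝ) / 2) = (q ^ ((1:ℝ)/2)) ^ n := by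
    intro n
    rw [← Real.rpow_natCast (q ^ ((1:ℝ)/2)) n, ← Real.rpow_mul hq0.le]
    congr 1
    ring
  have ht2 : Tendsto (fun n : ℕ => q ^ ((n : ℝ)/2) * x) atTop (𝓝 0) := by
    have hs0 : (0:ℝ) ≤ q ^ ((1:ℝ)/2) := Real.rpow_nonneg hq0.le _
    have hs1 : q ^ ((1:ℝ)/2) < 1 := Real.rpow_lt_one hq0.le hq1 (by norm_num)
    have := (tendsto_pow_atTop_nhds_zero_of_lt_one hs0 hs1).mul_const x
    rw [zero_mul] at this
    exact this.congr (fun n => by rw [hrpow n])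
  have hev := (ht1.eventually_le_const (show (0:ℝ) < 1/2 by norm_num)).and
    (ht2.eventually_le_const (show (0:ℝ) < (1 - q) * qPochInf q by positivity))
  obtain ⟨N, hN⟩ := eventually_atTop.mp hev
  refine ⟨N, fun n hn => ?_⟩
  obtain ⟨hc1, hc2⟩ := hN n hn
  -- notation
  set g : ℕ → ℝ := fun k => q ^ (k^2) * x ^ k / qPoch q k with hg
  set a : ℕ → ℂ := fun k => (q : ℂ) ^ (k^2) * (-w) ^ k / (qPoch q k : ℂ) with ha
  set s : ℕ → ℂ := fun k =>
    (q : ℂ) ^ (k^2) * (-w) ^ k * (qPochInf q : ℂ) / ((qPoch q k : ℂ) * (qPoch q (n-k) : ℂ))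
    with hsdef
  have hsum_eq : (∑ k ∈ Finset.range (n + 1),
      (q : ℂ) ^ (k ^ 2) * (-Complex.exp (2 * (lam : ℂ) * (Real.pi : ℂ) * I) / z) ^ k *
        (qPochInf q : ℂ) / ((qPoch q k : ℂ) * (qPoch q (n - k) : ℂ)))
      = ∑ k ∈ Finset.range (n+1), s k := by
    apply Finset.sum_congr rfl
    intro k _
    rw [hsdef]
    rw [neg_div]
  have hAq : Aq q w = ∑' k, a k := by rw [Aq]
  have hgsum : Summable g := summable_g hq0 hq1 hx0
  have hasum : Summable a := summable_a hq0 hq1 w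
  have hnorm_a : ∀ k, ‖a k‖ = g k := by
    intro k
    rw [ha, hg]
    simpa [hwx] using norm_a hq0 hq1 w k
  refine ⟨∑ k ∈ Finset.range (n+1), s k - Aq q w, by rw [hsum_eq]; ring, ?_⟩
  -- the error representation
  have hsplitA : ∑ k ∈ Finset.range (n+1), a k + ∑' j, a (j + (n+1)) = Aq q w := by
    rw [hAq]
    exact Summable.sum_add_tsum_nat_add (n+1) hasum
  have hr_eq : ∑ k ∈ Finset.range (n+1), s k - Aq q w
      = ∑ k ∈ Finset.range (n+1), (s k - a k) - ∑' j, a (j + (n+1)) := by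
    rw [← hsplitA, Finset.sum_sub_distrib]
    ring
  have htail_g_sum : Summable (fun j => g (j + (n+1))) :=
    (summable_nat_add_iff (f := g) (n+1)).mpr hgsum
  have htail_norm : ‖∑' j, a (j + (n+1))‖ ≤ ∑' j, g (j + (n+1)) := by
    have hsn : Summable (fun j => ‖a (j + (n+1))‖) :=
      htail_g_sum.congr (fun j => (hnorm_a _).symm)
    calc ‖∑' j, a (j + (n+1))‖ ≤ ∑' j, ‖a (j + (n+1))‖ := norm_tsum_le_tsum_norm hsn
      _ = ∑' j, g (j + (n+1)) := tsum_congr fun j => hnorm_a _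
  have hE : ∀ k, ‖s k - a k‖ ≤ g k * (q ^ (n - k + 1) / ((1-q) * qPochInf q)) := by
    intro k
    rw [hsdef, ha, hg]
    simpa [hwx] using err_le hq0 hq1 w n k
  have hnorm_r : ‖∑ k ∈ Finset.range (n+1), s k - Aq q w‖
      ≤ ∑ k ∈ Finset.range (n+1), ‖s k - a k‖ + ∑' j, g (j + (n+1)) := by
    rw [hr_eq]
    calc ‖∑ k ∈ Finset.range (n+1), (s k - a k) - ∑' j, a (j + (n+1))‖
        ≤ ‖∑ k ∈ Finset.range (n+1), (s k - a k)‖ + ‖∑' j, a (j + (n+1))‖ := norm_sub_le _ _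
      _ ≤ ∑ k ∈ Finset.range (n+1), ‖s k - a k‖ + ∑' j, g (j + (n+1)) := by
          exact add_le_add (norm_sum_le _ _) htail_norm
  -- split the finite sum
  have hm1n : n/2 + 1 ≤ n + 1 := by omega
  have hsum_split : ∑ k ∈ Finset.range (n+1), ‖s k - a k‖
      = ∑ k ∈ Finset.range (n/2+1), ‖s k - a k‖
        + ∑ k ∈ Finset.Ico (n/2+1) (n+1), ‖s k - a k‖ := by
    rw [Finset.range_eq_Ico, Finset.range_eq_Ico]
    exact (Finset.sum_Ico_consecutive _ (Nat.zero_le _) hm1n).symm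
  -- head bound
  have hhead : ∑ k ∈ Finset.range (n/2+1), ‖s k - a k‖
      ≤ Bq q x * (q ^ ((n:ℝ)/2) / ((1-q) * qPochInf q)) := by
    have hq2 : (0:ℝ) < q ^ ((n:ℝ)/2) := Real.rpow_pos_of_pos hq0 _
    calc ∑ k ∈ Finset.range (n/2+1), ‖s k - a k‖
        ≤ ∑ k ∈ Finset.range (n/2+1), g k * (q ^ ((n:ℝ)/2) / ((1-q) * qPochInf q)) := by
          apply Finset.sum_le_sum
          intro k hk
          refine le_trans (hE k) ?_
          have hk2 : k ≤ n/2 := by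
            simp only [Finset.mem_range] at hk
            omega
          have hcast : (n:ℝ) ≤ 2 * ((n - k + 1 : ℕ) : ℝ) := by
            exact_mod_cast (show n ≤ 2 * (n - k + 1) by omega)
          have hqle : q ^ (n - k + 1) ≤ q ^ ((n:ℝ)/2) := by
            calc q ^ (n - k + 1) = q ^ (((n - k + 1 : ℕ)):ℝ) := (Real.rpow_natCast q _).symm
              _ ≤ q ^ ((n:ℝ)/2) :=
                Real.rpow_le_rpow_of_exponent_ge hq0 hq1.le (by linarith)
          have := g_nonneg hq0 hq1 hx0 k
          gcongr
      _ = (∑ k ∈ Finset.range (n/2+1), g k) * (q ^ ((n:ℝ)/2) / ((1-q) * qPochInf q)) :=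
          (Finset.sum_mul _ _ _).symm
      _ ≤ Bq q x * (q ^ ((n:ℝ)/2) / ((1-q) * qPochInf q)) := by
          apply mul_le_mul_of_nonneg_right (sum_g_le_Bq hq0 hq1 hx0 _) (by positivity)
  -- mid and tail
  have hmid : ∑ k ∈ Finset.Ico (n/2+1) (n+1), ‖s k - a k‖
      ≤ ((1-q) * qPochInf q)⁻¹ * ∑ k ∈ Finset.Ico (n/2+1) (n+1), g k := by
    rw [Finset.mul_sum]
    apply Finset.sum_le_sum
    intro k hk
    refine le_trans (hE k) ?_
    have hqk1 : q ^ (n - k + 1) ≤ 1 := pow_le_one₀ hq0.le hq1.le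
    have hgk := g_nonneg hq0 hq1 hx0 k
    calc g k * (q ^ (n-k+1) / ((1-q) * qPochInf q))
        ≤ g k * (1 / ((1-q) * qPochInf q)) := by gcongr
      _ = ((1-q) * qPochInf q)⁻¹ * g k := by ring
  have hco1 : (1:ℝ) ≤ ((1-q) * qPochInf q)⁻¹ := by
    rw [le_inv_comm₀ (by norm_num) (by positivity)]
    calc (1-q) * qPochInf q ≤ 1 * 1 := by
          apply mul_le_mul (by linarith) hPle1 hPinf.le (by norm_num)
      _ = 1⁻¹ := by norm_num
  have htail2 : ∑' j, g (j + (n+1)) ≤ ((1-q) * qPochInf q)⁻¹ * ∑' j, g (j + (n+1)) := by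
    apply le_mul_of_one_le_left (tsum_nonneg fun j => g_nonneg hq0 hq1 hx0 _) hco1
  have hident : ∑ k ∈ Finset.Ico (n/2+1) (n+1), g k + ∑' j, g (j + (n+1))
      = ∑' j, g (j + (n/2+1)) := by
    have hs2 : Summable (fun j => g (j + (n/2+1))) :=
      (summable_nat_add_iff (f := g) (n/2+1)).mpr hgsum
    have h3 := Summable.sum_add_tsum_nat_add (f := fun j => g (j + (n/2+1))) (n+1-(n/2+1)) hs2
    rw [← h3]
    congr 1
    · rw [Finset.sum_Ico_eq_sum_range]
      apply Finset.sum_congr rfl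
      intro i _
      congr 1
      omega
    · apply tsum_congr
      intro j
      congr 1
      omega
  have htail3 : ∑' j, g (j + (n/2+1))
      ≤ 2 * (q ^ ((n/2+1)^2) * x ^ (n/2+1) / qPochInf q) := tail_le hq0 hq1 hx0 hc1
  -- final numeric bounds
  have hA : Bq q x * (q ^ ((n:ℝ)/2) / ((1-q) * qPochInf q))
      ≤ 2 * negQ3PochInf q * Bq q x / qPochInf q * q ^ ((n:ℝ)/2) := by
    have hq2 : (0:ℝ) < q ^ ((n:ℝ)/2) := Real.rpow_pos_of_pos hq0 _
    have key1 : 1 ≤ 2 * negQ3PochInf q * (1-q) := by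
      have h3 : q^3 / (1-q) * (1-q) = q^3 := by field_simp
      have h4 : (1-q) + q^3 ≤ negQ3PochInf q * (1-q) := by
        have h5 := mul_le_mul_of_nonneg_right hQ3 h1q.le
        rw [add_mul, h3, one_mul] at h5
        exact h5
      nlinarith [mul_nonneg (sq_nonneg (2*q-1)) hq0.le, sq_nonneg (4*q - 5/2), sq_nonneg (q - 1/2)]
    calc Bq q x * (q ^ ((n:ℝ)/2) / ((1-q) * qPochInf q))
        = (Bq q x * q ^ ((n:ℝ)/2)) * (1 / ((1-q) * qPochInf q)) := by ring
      _ ≤ (Bq q x * q ^ ((n:ℝ)/2)) * (2 * negQ3PochInf q / qPochInf q) := by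
          apply mul_le_mul_of_nonneg_left _ (by positivity)
          rw [div_le_div_iff₀ (by positivity) hPinf]
          nlinarith
      _ = 2 * negQ3PochInf q * Bq q x / qPochInf q * q ^ ((n:ℝ)/2) := by ring
  -- bound for mid+tail
  have hxz : x ^ (n/2) = (‖z‖ ^ (n/2))⁻¹ := by rw [hxdef, inv_pow]
  have hqm1 : q ^ ((n/2+1)^2) ≤ q ^ ((n:ℝ)^2/4) * q ^ ((n:ℝ)/2) := by
    have hc : (n:ℝ) ≤ 2*((n/2 : ℕ):ℝ) + 1 := by
      exact_mod_cast (show n ≤ 2*(n/2)+1 by omega)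
    have hexp : (n:ℝ)^2/4 + (n:ℝ)/2 ≤ (((n/2+1)^2 : ℕ):ℝ) := by
      push_cast
      nlinarith [show (0:ℝ) ≤ ((n/2 : ℕ):ℝ) from Nat.cast_nonneg _,
        show (0:ℝ) ≤ (n:ℝ) from Nat.cast_nonneg _]
    calc q ^ ((n/2+1)^2) = q ^ ((((n/2+1)^2 : ℕ)):ℝ) := (Real.rpow_natCast q _).symm
      _ ≤ q ^ ((n:ℝ)^2/4 + (n:ℝ)/2) :=
          Real.rpow_le_rpow_of_exponent_ge hq0 hq1.le hexp
      _ = q ^ ((n:ℝ)^2/4) * q ^ ((n:ℝ)/2) := Real.rpow_add hq0 _ _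
  have hB : ((1-q) * qPochInf q)⁻¹ * (2 * (q ^ ((n/2+1)^2) * x ^ (n/2+1) / qPochInf q))
      ≤ 2 * negQ3PochInf q * Bq q x / qPochInf q * (q ^ ((n:ℝ)^2/4) / ‖z‖ ^ (n/2)) := by
    have hq4 : (0:ℝ) < q ^ ((n:ℝ)^2/4) := Real.rpow_pos_of_pos hq0 _
    have hq5 : (0:ℝ) < q ^ ((n:ℝ)/2) := Real.rpow_pos_of_pos hq0 _
    have hD : (0:ℝ) < (1-q) * qPochInf q := by positivity
    calc ((1-q) * qPochInf q)⁻¹ * (2 * (q ^ ((n/2+1)^2) * x ^ (n/2+1) / qPochInf q))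
        = 2 * (q ^ ((n/2+1)^2) * (x ^ (n/2) * x)) / (((1-q) * qPochInf q) * qPochInf q) := by
          rw [pow_succ]
          rw [← div_div]
          ring
      _ ≤ 2 * ((q ^ ((n:ℝ)^2/4) * q ^ ((n:ℝ)/2)) * (x ^ (n/2) * x))
            / (((1-q) * qPochInf q) * qPochInf q) := by
          apply div_le_div_of_nonneg_right _ (by positivity)
          apply mul_le_mul_of_nonneg_left _ (by norm_num)
          exact mul_le_mul_of_nonneg_right hqm1 (by positivity)
      _ = (2 * q ^ ((n:ℝ)^2/4) * x ^ (n/2)) * (q ^ ((n:ℝ)/2) * x)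
            / (((1-q) * qPochInf q) * qPochInf q) := by ring
      _ ≤ (2 * q ^ ((n:ℝ)^2/4) * x ^ (n/2)) * ((1-q) * qPochInf q)
            / (((1-q) * qPochInf q) * qPochInf q) := by
          apply div_le_div_of_nonneg_right _ (by positivity)
          exact mul_le_mul_of_nonneg_left hc2 (by positivity)
      _ = (2 * q ^ ((n:ℝ)^2/4) * x ^ (n/2)) * ((1-q) * qPochInf q)
            / (qPochInf q * ((1-q) * qPochInf q)) := by rw [mul_comm ((1-q) * qPochInf q) (qPochInf q)]
      _ = (2 * q ^ ((n:ℝ)^2/4) * x ^ (n/2)) / qPochInf q :=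
          mul_div_mul_right _ _ hD.ne'
      _ = 2 * (q ^ ((n:ℝ)^2/4) * x ^ (n/2)) / qPochInf q := by ring
      _ ≤ 2 * (negQ3PochInf q * Bq q x) * (q ^ ((n:ℝ)^2/4) * x ^ (n/2)) / qPochInf q := by
          have h6 : (1:ℝ) ≤ negQ3PochInf q * Bq q x := by nlinarith
          have hu : (0:ℝ) ≤ q ^ ((n:ℝ)^2/4) * x ^ (n/2) := by positivity
          rw [div_le_div_iff₀ hPinf hPinf]
          nlinarith [mul_nonneg (mul_nonneg (by linarith : (0:ℝ) ≤ negQ3PochInf q * Bq q x - 1) hu) hPinf.le]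
      _ = 2 * negQ3PochInf q * Bq q x / qPochInf q * (q ^ ((n:ℝ)^2/4) / ‖z‖ ^ (n/2)) := by
          rw [div_eq_mul_inv (q ^ ((n:ℝ)^2/4)) (‖z‖ ^ (n/2)), ← hxz]
          ring
  -- combine everything
  have hfinal1 : ∑ k ∈ Finset.Ico (n/2+1) (n+1), ‖s k - a k‖ + ∑' j, g (j + (n+1))
      ≤ ((1-q) * qPochInf q)⁻¹ * (2 * (q ^ ((n/2+1)^2) * x ^ (n/2+1) / qPochInf q)) := by
    calc ∑ k ∈ Finset.Ico (n/2+1) (n+1), ‖s k - a k‖ + ∑' j, g (j + (n+1))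
        ≤ ((1-q) * qPochInf q)⁻¹ * ∑ k ∈ Finset.Ico (n/2+1) (n+1), g k
          + ((1-q) * qPochInf q)⁻¹ * ∑' j, g (j + (n+1)) := add_le_add hmid htail2
      _ = ((1-q) * qPochInf q)⁻¹ * (∑ k ∈ Finset.Ico (n/2+1) (n+1), g k + ∑' j, g (j + (n+1))) := by
          ring
      _ = ((1-q) * qPochInf q)⁻¹ * ∑' j, g (j + (n/2+1)) := by rw [hident]
      _ ≤ ((1-q) * qPochInf q)⁻¹ * (2 * (q ^ ((n/2+1)^2) * x ^ (n/2+1) / qPochInf q)) := by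
          apply mul_le_mul_of_nonneg_left htail3 (by positivity)
  calc ‖∑ k ∈ Finset.range (n+1), s k - Aq q w‖
      ≤ ∑ k ∈ Finset.range (n+1), ‖s k - a k‖ + ∑' j, g (j + (n+1)) := hnorm_r
    _ = ∑ k ∈ Finset.range (n/2+1), ‖s k - a k‖
        + (∑ k ∈ Finset.Ico (n/2+1) (n+1), ‖s k - a k‖ + ∑' j, g (j + (n+1))) := by
        rw [hsum_split]; ring
    _ ≤ Bq q x * (q ^ ((n:ℝ)/2) / ((1-q) * qPochInf q))
        + ((1-q) * qPochInf q)⁻¹ * (2 * (q ^ ((n/2+1)^2) * x ^ (n/2+1) / qPochInf q)) :=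
        add_le_add hhead hfinal1
    _ ≤ 2 * negQ3PochInf q * Bq q x / qPochInf q * q ^ ((n:ℝ)/2)
        + 2 * negQ3PochInf q * Bq q x / qPochInf q * (q ^ ((n:ℝ)^2/4) / ‖z‖ ^ (n/2)) :=
        add_le_add hA hB
    _ = 2 * negQ3PochInf q * Bq q x / qPochInf q *
        (q ^ ((n:ℝ)/2) + q ^ ((n:ℝ)^2/4) / ‖z‖ ^ (n/2)) := by ring
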